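/- Buzano-type bound for frame coefficients: If {τ_j}_{j=1}^n and {ω_k}_{k=1}^m are 1-bounded Parseval frames of a finite-dimensional Hilbert space H, then for every unit vector h, max_j |⟨h, τ_j⟩| · max_k |⟨h, ω_k⟩| ≤ (1 + max_{j,k} |⟨τ_j, ω_k⟩|)/2. -/

import Mathlib

open scoped InnerProductSpace

lemma buzano_aux {𝕜 H : Type*} [RCLike 𝕜] [NormedAddCommGroup H]
    [InnerProductSpace 𝕜 H] (x u v : H) (hx : ‖x‖ = 1) :
    ‖(inner 𝕜 u x : 𝕜)‖ * ‖(inner 𝕜 x v : 𝕜)‖ ≤ (‖u‖ * ‖v‖ + ‖(inner 𝕜 u v : 𝕜)‖) / 2 := by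
  set z : 𝕜 := inner 𝕜 x u with hz
  set R : H := ((2 : 𝕜) * z) • x - u with hR
  have hnormR : ‖R‖ = ‖u‖ := by
    have h1 : ‖R‖ ^ 2 = ‖u‖ ^ 2 := by
      have e := @norm_sub_sq 𝕜 H _ _ _ (((2 : 𝕜) * z) • x) u
      have hre : RCLike.re ((inner 𝕜 (((2 : 𝕜) * z) • x) u : 𝕜)) = 2 * ‖z‖ ^ 2 := by
        rw [inner_smul_left, ← hz, map_mul (starRingEnd 𝕜), RCLike.conj_ofNat, mul_assoc,
          RCLike.conj_mul, show ((2:𝕜) * (‖z‖:𝕜)^2) = (((2*‖z‖^2 : ℝ)) : 𝕜) by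
            push_cast; ring, RCLike.ofReal_re]
      rw [hR, e, hre, norm_smul]
      simp only [hx, norm_mul, RCLike.norm_ofNat, mul_one]
      ring
    nlinarith [norm_nonneg R, norm_nonneg u]
  have hRv : (inner 𝕜 R v : 𝕜) = 2 * (inner 𝕜 u x : 𝕜) * (inner 𝕜 x v : 𝕜) - inner 𝕜 u v := by
    rw [hR, inner_sub_left, inner_smul_left, map_mul (starRingEnd 𝕜), RCLike.conj_ofNat,
      inner_conj_symm]
  have hb : ‖2 * (inner 𝕜 u x : 𝕜) * (inner 𝕜 x v : 𝕜) - inner 𝕜 u v‖ ≤ ‖u‖ * ‖v‖ := by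
    rw [← hRv, ← hnormR]; exact norm_inner_le_norm R v
  have h2 : ‖(inner 𝕜 u x : 𝕜) * (inner 𝕜 x v : 𝕜)‖ * 2 ≤ ‖u‖ * ‖v‖ + ‖(inner 𝕜 u v : 𝕜)‖ := by
    calc ‖(inner 𝕜 u x : 𝕜) * (inner 𝕜 x v : 𝕜)‖ * 2
        = ‖(2 * (inner 𝕜 u x : 𝕜) * (inner 𝕜 x v : 𝕜) - inner 𝕜 u v) + inner 𝕜 u v‖ := by
          rw [sub_add_cancel, show (2 : 𝕜) * (inner 𝕜 u x : 𝕜) * (inner 𝕜 x v : 𝕜)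
              = ((inner 𝕜 u x : 𝕜) * (inner 𝕜 x v : 𝕜)) * 2 by ring, norm_mul]
          simp
      _ ≤ ‖u‖ * ‖v‖ + ‖(inner 𝕜 u v : 𝕜)‖ := le_trans (norm_add_le _ _) (by gcongr)
  rw [← norm_mul]; linarith

theorem buzano_frame_coefficients {𝕜 H : Type*} [RCLike 𝕜] [NormedAddCommGroup H]
    [InnerProductSpace 𝕜 H] [FiniteDimensional 𝕜 H]
    {n m : ℕ} (hn : 0 < n) (hm : 0 < m)
    (τ : Fin n → H) (ω : Fin m → H)
    (hτ : ∀ x : H, ‖x‖ ^ 2 = ∑ j, ‖(inner 𝕜 x (τ j) : 𝕜)‖ ^ 2)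
    (hω : ∀ x : H, ‖x‖ ^ 2 = ∑ k, ‖(inner 𝕜 x (ω k) : 𝕜)‖ ^ 2)
    (hτ1 : ∀ j, ‖τ j‖ ≤ 1) (hω1 : ∀ k, ‖ω k‖ ≤ 1)
    (h : H) (hh : ‖h‖ = 1) :
    (⨆ j, ‖(inner 𝕜 h (τ j) : 𝕜)‖) * (⨆ k, ‖(inner 𝕜 h (ω k) : 𝕜)‖) ≤
      (1 + ⨆ j, ⨆ k, ‖(inner 𝕜 (τ j) (ω k) : 𝕜)‖) / 2 := by
  have : Nonempty (Fin n) := ⟨⟨0, hn⟩⟩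
  have : Nonempty (Fin m) := ⟨⟨0, hm⟩⟩
  obtain ⟨j0, hj0⟩ := exists_eq_ciSup_of_finite (f := fun j => ‖(inner 𝕜 h (τ j) : 𝕜)‖)
  obtain ⟨k0, hk0⟩ := exists_eq_ciSup_of_finite (f := fun k => ‖(inner 𝕜 h (ω k) : 𝕜)‖)
  rw [← hj0, ← hk0]
  calc ‖(inner 𝕜 h (τ j0) : 𝕜)‖ * ‖(inner 𝕜 h (ω k0) : 𝕜)‖
      = ‖(inner 𝕜 (τ j0) h : 𝕜)‖ * ‖(inner 𝕜 h (ω k0) : 𝕜)‖ := by rw [norm_inner_symm]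
    _ ≤ (‖τ j0‖ * ‖ω k0‖ + ‖(inner 𝕜 (τ j0) (ω k0) : 𝕜)‖) / 2 := buzano_aux h (τ j0) (ω k0) hh
    _ ≤ (1 + ⨆ j, ⨆ k, ‖(inner 𝕜 (τ j) (ω k) : 𝕜)‖) / 2 := by
        gcongr
        · exact mul_le_one₀ (hτ1 j0) (norm_nonneg _) (hω1 k0)
        · exact le_trans
            (le_ciSup (f := fun k => ‖(inner 𝕜 (τ j0) (ω k) : 𝕜)‖)
              (Set.Finite.bddAbove (Set.finite_range _)) k0)
            (le_ciSup (f := fun j => ⨆ k, ‖(inner 𝕜 (τ j) (ω k) : 𝕜)‖)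
              (Set.Finite.bddAbove (Set.finite_range _)) j0)
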